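/- If Ω is an ε-embedding of W + span(b), then the sketch-orthogonal projection is quasi-optimal: ‖b - P_W^Ω b‖ ≤ √((1+ε)/(1-ε)) · min_{w ∈ W} ‖b - w‖. -/
import Mathlib


open Matrix

noncomputable def eunorm {k : ℕ} (x : Fin k → ℝ) : ℝ := Real.sqrt (x ⬝ᵥ x)

lemma dot_self_nonneg' {k : ℕ} (x : Fin k → ℝ) : 0 ≤ x ⬝ᵥ x :=
  Finset.sum_nonneg fun i _ => mul_self_nonneg _

lemma eunorm_sq {k : ℕ} (x : Fin k → ℝ) : eunorm x ^ 2 = x ⬝ᵥ x :=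
  Real.sq_sqrt (dot_self_nonneg' x)

lemma key_proj {l m : ℕ} (A : Matrix (Fin l) (Fin m) ℝ) (hA : Aᵀ * A = 1)
    (x : Fin l → ℝ) (u : Fin m → ℝ) :
    (x - (A * Aᵀ).mulVec x) ⬝ᵥ (x - (A * Aᵀ).mulVec x) ≤
      (x - A.mulVec u) ⬝ᵥ (x - A.mulVec u) := by
  set p := (A * Aᵀ).mulVec x with hp
  set s := x - p with hs
  set t := p - A.mulVec u with ht
  have hxu : x - A.mulVec u = s + t := by simp [hs, ht]
  have hAts : Aᵀ.mulVec s = 0 := by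
    have : Aᵀ.mulVec p = Aᵀ.mulVec x := by
      rw [hp, Matrix.mulVec_mulVec, ← Matrix.mul_assoc, hA, Matrix.one_mul]
    simp [hs, Matrix.mulVec_sub, this]
  have hst : s ⬝ᵥ t = 0 := by
    have h1 : t = A.mulVec (Aᵀ.mulVec x - u) := by
      rw [ht, hp, Matrix.mulVec_sub, Matrix.mulVec_mulVec]
    rw [h1, Matrix.dotProduct_mulVec, ← Matrix.mulVec_transpose, hAts,
      zero_dotProduct]
  have htt : 0 ≤ t ⬝ᵥ t := dot_self_nonneg' t
  rw [hxu]
  have expand : (s + t) ⬝ᵥ (s + t) = s ⬝ᵥ s + 2 * (s ⬝ᵥ t) + t ⬝ᵥ t := by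
    rw [add_dotProduct, dotProduct_add, dotProduct_add,
      dotProduct_comm t s]
    ring
  rw [expand, hst]
  linarith

/-- If Ω is an ε-embedding of W + span(b), then the sketch-orthogonal projection is
quasi-optimal: ‖b - P_W^Ω b‖ ≤ √((1+ε)/(1-ε)) · min_{w ∈ W} ‖b - w‖. -/
theorem stmt7 {n m l : ℕ} (W : Submodule ℝ (Fin n → ℝ)) (b : Fin n → ℝ)
    (ε : ℝ) (hε0 : 0 < ε) (hε1 : ε < 1)
    (Ω : Matrix (Fin l) (Fin n) ℝ) (Q : Matrix (Fin n) (Fin m) ℝ)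
    (hrange : LinearMap.range Q.mulVecLin = W)
    (horth : (Ω * Q)ᵀ * (Ω * Q) = 1)
    (hemb : ∀ w ∈ W ⊔ Submodule.span ℝ {b},
      (1 - ε) * eunorm w ^ 2 ≤ eunorm (Ω.mulVec w) ^ 2 ∧
      eunorm (Ω.mulVec w) ^ 2 ≤ (1 + ε) * eunorm w ^ 2) :
    ∀ w ∈ W,
      eunorm (b - (Q * (Ω * Q)ᵀ * Ω).mulVec b) ≤
        Real.sqrt ((1 + ε) / (1 - ε)) * eunorm (b - w) := by
  intro w hw
  have h1e : (0:ℝ) < 1 - ε := by linarith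
  -- w = Q u
  rw [← hrange] at hw
  obtain ⟨u, hu⟩ := hw
  rw [Matrix.mulVecLin_apply] at hu
  set r := b - (Q * (Ω * Q)ᵀ * Ω).mulVec b with hr
  -- membership
  have hb_mem : b ∈ W ⊔ Submodule.span ℝ {b} :=
    Submodule.mem_sup_right (Submodule.mem_span_singleton_self b)
  have hw_mem : w ∈ W ⊔ Submodule.span ℝ {b} := by
    apply Submodule.mem_sup_left
    rw [← hrange]; exact ⟨u, by rw [Matrix.mulVecLin_apply, hu]⟩
  have hp_mem : (Q * (Ω * Q)ᵀ * Ω).mulVec b ∈ W ⊔ Submodule.span ℝ {b} := by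
    apply Submodule.mem_sup_left
    rw [← hrange]
    refine ⟨((Ω * Q)ᵀ * Ω).mulVec b, ?_⟩
    rw [Matrix.mulVecLin_apply, Matrix.mulVec_mulVec, Matrix.mul_assoc]
  have hr_mem : r ∈ W ⊔ Submodule.span ℝ {b} := Submodule.sub_mem _ hb_mem hp_mem
  have hbw_mem : b - w ∈ W ⊔ Submodule.span ℝ {b} := Submodule.sub_mem _ hb_mem hw_mem
  -- embedding bounds
  have h1 := (hemb r hr_mem).1
  have h2 := (hemb (b - w) hbw_mem).2
  -- middle inequality via key_proj with A = Ω * Q, x = Ω.mulVec b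
  have hΩr : Ω.mulVec r = Ω.mulVec b - ((Ω * Q) * (Ω * Q)ᵀ).mulVec (Ω.mulVec b) := by
    simp [hr, Matrix.mulVec_sub, Matrix.mulVec_mulVec, Matrix.mul_assoc]
  have hΩbw : Ω.mulVec (b - w) = Ω.mulVec b - (Ω * Q).mulVec u := by
    rw [Matrix.mulVec_sub, ← hu, Matrix.mulVec_mulVec]
  have hmid : eunorm (Ω.mulVec r) ^ 2 ≤ eunorm (Ω.mulVec (b - w)) ^ 2 := by
    rw [eunorm_sq, eunorm_sq, hΩr, hΩbw]
    exact key_proj (Ω * Q) horth (Ω.mulVec b) u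
  have hmain : (1 - ε) * eunorm r ^ 2 ≤ (1 + ε) * eunorm (b - w) ^ 2 := by linarith
  have hdiv : eunorm r ^ 2 ≤ (1 + ε) / (1 - ε) * eunorm (b - w) ^ 2 := by
    rw [div_mul_eq_mul_div, le_div_iff₀ h1e]; linarith
  have hrn : 0 ≤ eunorm r := Real.sqrt_nonneg _
  have hbwn : 0 ≤ eunorm (b - w) := Real.sqrt_nonneg _
  calc eunorm r = Real.sqrt (eunorm r ^ 2) := (Real.sqrt_sq hrn).symm
    _ ≤ Real.sqrt ((1 + ε) / (1 - ε) * eunorm (b - w) ^ 2) := Real.sqrt_le_sqrt hdiv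
    _ = Real.sqrt ((1 + ε) / (1 - ε)) * eunorm (b - w) := by
        rw [Real.sqrt_mul (by positivity), Real.sqrt_sq hbwn]
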